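/- The 6×6 isotropic elasticity matrix E with diagonal blocks E_ii = Em(1-ν)/((1-2ν)(1+ν)) for i=1,2,3, off-diagonal entries E_ij = Em·ν/((1-2ν)(1+ν)) for i≠j, i,j ∈ {1,2,3}, shear diagonal entries E_ii = Em(1/2-ν)/((1-2ν)(1+ν)) for i=4,5,6, and zeros elsewhere, is positive definite whenever Em > 0 and -1 < ν < 1/2. -/

import Mathlib

set_option maxHeartbeats 1000000 in
open Matrix in
theorem elasticity_matrix_posDef (Em ν : ℝ) (hEm : 0 < Em)
    (hν1 : -1 < ν) (hν2 : ν < 1/2) :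
    (!![Em*(1-ν)/((1-2*ν)*(1+ν)), Em*ν/((1-2*ν)*(1+ν)), Em*ν/((1-2*ν)*(1+ν)), 0, 0, 0;
       Em*ν/((1-2*ν)*(1+ν)), Em*(1-ν)/((1-2*ν)*(1+ν)), Em*ν/((1-2*ν)*(1+ν)), 0, 0, 0;
       Em*ν/((1-2*ν)*(1+ν)), Em*ν/((1-2*ν)*(1+ν)), Em*(1-ν)/((1-2*ν)*(1+ν)), 0, 0, 0;
       0, 0, 0, Em*(1/2-ν)/((1-2*ν)*(1+ν)), 0, 0;
       0, 0, 0, 0, Em*(1/2-ν)/((1-2*ν)*(1+ν)), 0;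
       0, 0, 0, 0, 0, Em*(1/2-ν)/((1-2*ν)*(1+ν))] : Matrix (Fin 6) (Fin 6) ℝ).PosDef := by
  have hD : 0 < (1-2*ν)*(1+ν) := by nlinarith
  have hc : 0 < Em / ((1-2*ν)*(1+ν)) := div_pos hEm hD
  have hs : 0 < (1/2 - ν) := by linarith
  have hA : 0 < 1 + ν := by linarith
  have hB : 0 < 1 - 2*ν := by linarith
  rw [Matrix.posDef_iff_dotProduct_mulVec]
  constructor
  · ext i j
    fin_cases i <;> fin_cases j <;> rfl
  · intro x hx
    simp only [star_trivial, dotProduct, Matrix.mulVec, dotProduct,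
      Fin.sum_univ_six, Matrix.cons_val', Matrix.cons_val_zero, Matrix.cons_val_one,
      Matrix.head_cons, Matrix.empty_val', Matrix.cons_val_fin_one, Matrix.head_fin_const,
      Matrix.cons_val_succ, Matrix.of_apply, Matrix.cons_val_fin_one, Matrix.cons_val_two,
      Matrix.cons_val_three, Matrix.cons_val_four, Matrix.tail_cons]
    have hpos : 0 < x 0^2 + x 1^2 + x 2^2 + x 3^2 + x 4^2 + x 5^2 := by
      by_contra hcon
      push_neg at hcon
      apply hx
      have h0 : ∀ j : Fin 6, x j ^ 2 ≤ 0 → x j = 0 := fun j hj =>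
        pow_eq_zero_iff two_ne_zero |>.mp (le_antisymm hj (sq_nonneg _))
      funext i
      fin_cases i <;> simp <;>
        · apply h0
          nlinarith [sq_nonneg (x 0), sq_nonneg (x 1), sq_nonneg (x 2), sq_nonneg (x 3),
            sq_nonneg (x 4), sq_nonneg (x 5)]
    have step : (x 0) * (Em*(1-ν)/((1-2*ν)*(1+ν)) * x 0 + Em*ν/((1-2*ν)*(1+ν)) * x 1 + Em*ν/((1-2*ν)*(1+ν)) * x 2 + 0 * x 3 + 0 * x 4 + 0 * x 5) +
          (x 1) * (Em*ν/((1-2*ν)*(1+ν)) * x 0 + Em*(1-ν)/((1-2*ν)*(1+ν)) * x 1 + Em*ν/((1-2*ν)*(1+ν)) * x 2 + 0 * x 3 + 0 * x 4 + 0 * x 5) +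
          (x 2) * (Em*ν/((1-2*ν)*(1+ν)) * x 0 + Em*ν/((1-2*ν)*(1+ν)) * x 1 + Em*(1-ν)/((1-2*ν)*(1+ν)) * x 2 + 0 * x 3 + 0 * x 4 + 0 * x 5) +
          (x 3) * (0 * x 0 + 0 * x 1 + 0 * x 2 + Em*(1/2-ν)/((1-2*ν)*(1+ν)) * x 3 + 0 * x 4 + 0 * x 5) +
          (x 4) * (0 * x 0 + 0 * x 1 + 0 * x 2 + 0 * x 3 + Em*(1/2-ν)/((1-2*ν)*(1+ν)) * x 4 + 0 * x 5) +
          (x 5) * (0 * x 0 + 0 * x 1 + 0 * x 2 + 0 * x 3 + 0 * x 4 + Em*(1/2-ν)/((1-2*ν)*(1+ν)) * x 5)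
          = Em/((1-2*ν)*(1+ν)) * ((1-ν)*(x 0^2 + x 1^2 + x 2^2) + 2*ν*(x 0 * x 1 + x 0 * x 2 + x 1 * x 2)
              + (1/2-ν)*(x 3^2 + x 4^2 + x 5^2)) := by ring
    refine lt_of_lt_of_eq (mul_pos hc ?_) step.symm
    have hS : 0 < x 0^2 + x 1^2 + x 2^2 ∨ 0 < x 3^2 + x 4^2 + x 5^2 := by
      rcases lt_or_ge 0 (x 0^2 + x 1^2 + x 2^2) with h | h
      · exact Or.inl h
      · right; nlinarith [sq_nonneg (x 0), sq_nonneg (x 1), sq_nonneg (x 2)]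
    rcases hS with h | h <;> rcases le_or_gt ν 0 with hν | hν
    · nlinarith [mul_pos hA h, mul_nonneg (neg_nonneg.mpr hν) (sq_nonneg (x 0 - x 1)),
        mul_nonneg (neg_nonneg.mpr hν) (sq_nonneg (x 1 - x 2)),
        mul_nonneg (neg_nonneg.mpr hν) (sq_nonneg (x 0 - x 2)),
        mul_nonneg hs.le (sq_nonneg (x 3)), mul_nonneg hs.le (sq_nonneg (x 4)),
        mul_nonneg hs.le (sq_nonneg (x 5))]
    · nlinarith [mul_pos hB h, mul_nonneg hν.le (sq_nonneg (x 0 + x 1 + x 2)),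
        mul_nonneg hs.le (sq_nonneg (x 3)), mul_nonneg hs.le (sq_nonneg (x 4)),
        mul_nonneg hs.le (sq_nonneg (x 5))]
    · nlinarith [mul_pos hs h, mul_nonneg hA.le (sq_nonneg (x 0)),
        mul_nonneg hA.le (sq_nonneg (x 1)), mul_nonneg hA.le (sq_nonneg (x 2)),
        mul_nonneg (neg_nonneg.mpr hν) (sq_nonneg (x 0 - x 1)),
        mul_nonneg (neg_nonneg.mpr hν) (sq_nonneg (x 1 - x 2)),
        mul_nonneg (neg_nonneg.mpr hν) (sq_nonneg (x 0 - x 2))]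
    · nlinarith [mul_pos hs h, mul_nonneg hB.le (sq_nonneg (x 0)),
        mul_nonneg hB.le (sq_nonneg (x 1)), mul_nonneg hB.le (sq_nonneg (x 2)),
        mul_nonneg hν.le (sq_nonneg (x 0 + x 1 + x 2))]
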